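/- Let ẑ_M and z_M be as follows: z_M | z_O is Gaussian with mean ẑ_M = W_M M_O⁻¹ W_Oᵀ z_O and covariance C = σ²I + σ²W_M M_O⁻¹W_Mᵀ, where M_O = σ²I_k + W_OᵀW_O. Then the expected conditional squared error satisfies E[‖ẑ_M − z_M‖² | z_O] = tr(C) ≤ |M| σ² (1 + λ_max(W_M)²/(σ² + λ_min(W_O)²)). -/

import Mathlib

open Matrix MeasureTheory ProbabilityTheory

private lemma dot_cs {n : ℕ} (v w : Fin n → ℝ) :
    (v ⬝ᵥ w) ^ 2 ≤ (v ⬝ᵥ v) * (w ⬝ᵥ w) := by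
  simpa [dotProduct, sq] using Finset.sum_mul_sq_le_sq_mul_sq Finset.univ v w

private lemma dot_self_nonneg {n : ℕ} (v : Fin n → ℝ) : 0 ≤ v ⬝ᵥ v :=
  Finset.sum_nonneg fun i _ => mul_self_nonneg _

/-- If `z_M | z_O` is Gaussian with mean `ẑ_M = W_M M_O⁻¹ W_Oᵀ z_O` and covariance
`C = σ²I + σ²W_M M_O⁻¹ W_Mᵀ` (so the conditional covariance entries are the constants
`C i j`), then the expected conditional squared error is `E[‖ẑ_M − z_M‖² | z_O] = tr C`,
and `tr C ≤ |M| σ² (1 + λ_max(W_M)²/(σ² + λ_min(W_O)²))`. -/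
theorem expected_conditional_squared_error {Ω : Type*} [MeasureSpace Ω]
    [IsProbabilityMeasure (ℙ : Measure Ω)]
    {q m k : ℕ} (WO : Matrix (Fin q) (Fin k) ℝ) (WM : Matrix (Fin m) (Fin k) ℝ)
    (σ : ℝ) (hσ : 0 < σ)
    (zO : Ω → Fin q → ℝ) (zM : Ω → Fin m → ℝ) (hmO : Measurable zO) (hmM : Measurable zM)
    (C : Matrix (Fin m) (Fin m) ℝ)
    (hC : C = σ ^ 2 • (1 : Matrix (Fin m) (Fin m) ℝ) +
        σ ^ 2 • (WM * (σ ^ 2 • (1 : Matrix (Fin k) (Fin k) ℝ) + WOᵀ * WO)⁻¹ * WMᵀ))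
    (zhat : Ω → Fin m → ℝ)
    (hzhat : ∀ ω, zhat ω =
      (WM * (σ ^ 2 • (1 : Matrix (Fin k) (Fin k) ℝ) + WOᵀ * WO)⁻¹ * WOᵀ).mulVec (zO ω))
    (hcov : ∀ i j : Fin m,
      (ℙ : Measure Ω)[(fun ω => (zM ω i - zhat ω i) * (zM ω j - zhat ω j)) |
          MeasurableSpace.comap zO inferInstance]
        =ᵐ[(ℙ : Measure Ω)] fun _ => C i j)
    (lammax lammin : ℝ) (hlammax0 : 0 ≤ lammax) (hlammin0 : 0 ≤ lammin)
    (hmax : ∀ v : Fin k → ℝ, (WM.mulVec v) ⬝ᵥ (WM.mulVec v) ≤ lammax ^ 2 * (v ⬝ᵥ v))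
    (hmin : ∀ v : Fin k → ℝ, lammin ^ 2 * (v ⬝ᵥ v) ≤ (WO.mulVec v) ⬝ᵥ (WO.mulVec v)) :
    ((ℙ : Measure Ω)[(fun ω => ∑ i, (zhat ω i - zM ω i) ^ 2) |
        MeasurableSpace.comap zO inferInstance]
      =ᵐ[(ℙ : Measure Ω)] fun _ => C.trace) ∧
    C.trace ≤ (m : ℝ) * σ ^ 2 * (1 + lammax ^ 2 / (σ ^ 2 + lammin ^ 2)) := by
  set A : Matrix (Fin k) (Fin k) ℝ :=
    σ ^ 2 • (1 : Matrix (Fin k) (Fin k) ℝ) + WOᵀ * WO with hAdef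
  set c : ℝ := σ ^ 2 + lammin ^ 2 with hcdef
  have hc : 0 < c := by positivity
  -- quadratic-form lower bound for A
  have hquad : ∀ v : Fin k → ℝ, c * (v ⬝ᵥ v) ≤ v ⬝ᵥ A.mulVec v := by
    intro v
    have h1 : v ⬝ᵥ A.mulVec v = σ ^ 2 * (v ⬝ᵥ v) + (WO.mulVec v) ⬝ᵥ (WO.mulVec v) := by
      rw [hAdef]
      rw [Matrix.add_mulVec, Matrix.smul_mulVec, Matrix.one_mulVec,
        dotProduct_add, dotProduct_smul, ← Matrix.mulVec_mulVec,
        dotProduct_mulVec v WOᵀ, vecMul_transpose, smul_eq_mul]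
    have := hmin v
    rw [h1, hcdef]
    nlinarith [dot_self_nonneg v]
  -- A is positive definite, hence invertible
  have hAsym : Aᵀ = A := by
    rw [hAdef]
    simp [Matrix.transpose_add, Matrix.transpose_smul, Matrix.transpose_mul,
      Matrix.transpose_transpose]
  have hApd : A.PosDef := by
    rw [posDef_iff_dotProduct_mulVec]
    constructor
    · show Aᴴ = A
      ext i j
      simp only [Matrix.conjTranspose_apply, star_trivial]
      rw [← Matrix.transpose_apply A i j, hAsym]
    · intro x hx
      have hxx : 0 < x ⬝ᵥ x := by
        rcases (dot_self_nonneg x).lt_or_eq with h | h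
        · exact h
        · exact absurd (dotProduct_self_eq_zero.mp h.symm) hx
      have hstar : star x = x := by funext i; simp
      rw [hstar]
      calc (0:ℝ) < c * (x ⬝ᵥ x) := by positivity
        _ ≤ x ⬝ᵥ A.mulVec x := hquad x
  have hdet : IsUnit A.det := isUnit_iff_ne_zero.2 (ne_of_gt hApd.det_pos)
  have hAAinv : A * A⁻¹ = 1 := Matrix.mul_nonsing_inv A hdet
  -- diagonal entries of B := WM * A⁻¹ * WMᵀ
  set B : Matrix (Fin m) (Fin m) ℝ := WM * A⁻¹ * WMᵀ with hBdef
  have hBdiag : ∀ i : Fin m, 0 ≤ B i i ∧ B i i ≤ lammax ^ 2 / c := by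
    intro i
    set u : Fin k → ℝ := fun a => WM i a with hudef
    set w : Fin k → ℝ := A⁻¹.mulVec u with hwdef
    have hBii : B i i = u ⬝ᵥ w := by
      rw [hBdef, hwdef, hudef]
      simp [Matrix.mul_apply, Matrix.mulVec, dotProduct, Finset.mul_sum, Finset.sum_mul]
      rw [Finset.sum_comm]
      apply Finset.sum_congr rfl; intro a _
      apply Finset.sum_congr rfl; intro b _
      ring
    have hAw : A.mulVec w = u := by
      rw [hwdef, Matrix.mulVec_mulVec, hAAinv, Matrix.one_mulVec]
    have hsym : u ⬝ᵥ w = w ⬝ᵥ A.mulVec w := by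
      rw [hAw, dotProduct_comm]
    -- row norm bound : u ⬝ᵥ u ≤ lammax ^ 2
    have hrow : u ⬝ᵥ u ≤ lammax ^ 2 := by
      set e : Fin m → ℝ := Pi.single i 1 with hedef
      have hue : u = WMᵀ.mulVec e := by
        funext a
        simp [hudef, hedef, Matrix.mulVec, dotProduct, Pi.single_apply, Matrix.transpose_apply]
      have hee : e ⬝ᵥ e = 1 := by
        simp [hedef, dotProduct, Pi.single_apply]
      have h1 : u ⬝ᵥ u = (WM.mulVec u) ⬝ᵥ e := by
        conv_lhs => rw [hue]
        rw [dotProduct_mulVec, vecMul_transpose, hue]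
      have h2 : (u ⬝ᵥ u) ^ 2 ≤ lammax ^ 2 * (u ⬝ᵥ u) := by
        calc (u ⬝ᵥ u) ^ 2 = ((WM.mulVec u) ⬝ᵥ e) ^ 2 := by rw [h1]
          _ ≤ ((WM.mulVec u) ⬝ᵥ (WM.mulVec u)) * (e ⬝ᵥ e) := dot_cs _ _
          _ = (WM.mulVec u) ⬝ᵥ (WM.mulVec u) := by rw [hee, mul_one]
          _ ≤ lammax ^ 2 * (u ⬝ᵥ u) := hmax u
      rcases eq_or_lt_of_le (dot_self_nonneg u) with h | h
      · rw [← h]; positivity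
      · nlinarith
    have hcs : (u ⬝ᵥ w) ^ 2 ≤ (u ⬝ᵥ u) * (w ⬝ᵥ w) := dot_cs u w
    have hlow : c * (w ⬝ᵥ w) ≤ u ⬝ᵥ w := by rw [hsym]; exact hquad w
    have hnn : 0 ≤ u ⬝ᵥ w := le_trans (mul_nonneg hc.le (dot_self_nonneg w)) hlow
    constructor
    · rw [hBii]; exact hnn
    · rw [hBii, le_div_iff₀ hc]
      rcases eq_or_lt_of_le hnn with h | h
      · rw [← h, zero_mul]; positivity
      · nlinarith [dot_self_nonneg u, dot_self_nonneg w]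
  have hCdiag : ∀ i : Fin m, C i i = σ ^ 2 + σ ^ 2 * B i i := by
    intro i
    rw [hC]
    simp [hBdef, hAdef, Matrix.add_apply, Matrix.smul_apply, Matrix.one_apply]
  have hCpos : ∀ i : Fin m, 0 < C i i := by
    intro i
    have := (hBdiag i).1
    rw [hCdiag i]
    nlinarith
  -- Part 2: trace bound
  have htrace : C.trace ≤ (m : ℝ) * σ ^ 2 * (1 + lammax ^ 2 / c) := by
    have : C.trace = ∑ i : Fin m, C i i := rfl
    rw [this]
    calc ∑ i : Fin m, C i i ≤ ∑ _i : Fin m, (σ ^ 2 + σ ^ 2 * (lammax ^ 2 / c)) := by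
          apply Finset.sum_le_sum
          intro i _
          rw [hCdiag i]
          have := (hBdiag i).2
          nlinarith
      _ = (m : ℝ) * σ ^ 2 * (1 + lammax ^ 2 / c) := by
          rw [Finset.sum_const]
          simp [Finset.card_univ]
          ring
  refine ⟨?_, htrace⟩
  -- Part 1
  set f : Fin m → Ω → ℝ := fun i ω => (zM ω i - zhat ω i) * (zM ω i - zhat ω i) with hfdef
  have hint : ∀ i : Fin m, Integrable (f i) (ℙ : Measure Ω) := by
    intro i
    by_contra hni
    have h0 : (ℙ : Measure Ω)[f i | MeasurableSpace.comap zO inferInstance] = 0 :=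
      condExp_of_not_integrable hni
    have h1 : (fun _ : Ω => C i i) =ᵐ[(ℙ : Measure Ω)] (fun _ => (0:ℝ)) := by
      have := hcov i i
      rw [h0] at this
      exact this.symm
    obtain ⟨ω, hω⟩ := h1.exists
    exact absurd hω (by simpa using (hCpos i).ne')
  have hfsum : (fun ω => ∑ i, (zhat ω i - zM ω i) ^ 2) = ∑ i : Fin m, f i := by
    funext ω
    simp only [Finset.sum_apply, hfdef]
    apply Finset.sum_congr rfl
    intro i _
    ring
  rw [hfsum]
  have hsum := condExp_finsetSum (m := MeasurableSpace.comap zO inferInstance)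
    (μ := (ℙ : Measure Ω)) (s := Finset.univ) (f := f) (fun i _ => hint i)
  refine hsum.trans ?_
  have : (fun _ : Ω => C.trace) = ∑ i : Fin m, (fun _ : Ω => C i i) := by
    funext ω
    simp [Matrix.trace, Matrix.diag]
  rw [this]
  exact eventuallyEq_sum fun i _ => hcov i i
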